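/- If the set P_i^{ID} is connected and is disjoint from ⋃_{j≠i} P_j, then for every k∈P_i^{ID} the additive subset P_i^{add}(k) exists and is unique: there is a unique largest connected subset of Q satisfying conditions (1) and (2) of the additive-subset definition, and it contains every connected subset of Q satisfying those conditions. -/
import Mathlib


open scoped Classical ENNReal

noncomputable section

universe u

/-- A weighted graph environment `G(Q) = (Q, E)` with undirected edges and
positive edge weights. -/
structure Env (V : Type u) where
  adj : V → V → Prop
  adj_symm : ∀ u v, adj u v → adj v u
  adj_irrefl : ∀ v, ¬ adj v v
  w : V → V → ℝ
  w_pos : ∀ u v, adj u v → 0 < w u v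
  w_symm : ∀ u v, w u v = w v u

variable {V : Type u}

/-- `PathIn G S p` : `p` is a (nonempty) walk of `G` all of whose vertices lie in `S`. -/
def PathIn (G : Env V) (S : Set V) : List V → Prop
  | [] => False
  | [v] => v ∈ S
  | u :: v :: rest => u ∈ S ∧ G.adj u v ∧ PathIn G S (v :: rest)

/-- Total weighted length of a walk. -/
def pathLen (G : Env V) : List V → ℝ≥0∞
  | [] => 0
  | [_] => 0
  | u :: v :: rest => ENNReal.ofReal (G.w u v) + pathLen G (v :: rest)

/-- Weighted shortest-path distance between two vertices inside the subgraph of `G`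
induced on `S` (`∞` if no connecting path inside `S` exists). -/
def dIn (G : Env V) (S : Set V) (a b : V) : ℝ≥0∞ :=
  sInf {L : ℝ≥0∞ | ∃ p : List V, PathIn G S p ∧ p.head? = some a ∧
    p.getLast? = some b ∧ pathLen G p = L}

/-- Length of a shortest path inside the subgraph induced on `S` from `a` to the set `B`. -/
def dInSet (G : Env V) (S : Set V) (a : V) (B : Set V) : ℝ≥0∞ :=
  ⨅ b ∈ B, dIn G S a b

/-- A subset `S` is connected if its induced subgraph is connected. -/
def ConnIn (G : Env V) (S : Set V) : Prop :=
  ∀ a ∈ S, ∀ b ∈ S, ∃ p : List V, PathIn G S p ∧ p.head? = some a ∧ p.getLast? = some b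

/-- A vertex `k` is adjacent to a set `S`. -/
def AdjTo (G : Env V) (k : V) (S : Set V) : Prop :=
  k ∉ S ∧ ∃ v ∈ S, G.adj k v

/-- An `m`-covering of the vertex set. -/
def IsCovering {m : ℕ} (P : Fin m → Set V) : Prop :=
  (∀ v : V, ∃ i, v ∈ P i) ∧ ∀ i, (P i).Nonempty

/-- An `m`-partition of the vertex set. -/
def IsPartition {m : ℕ} (P : Fin m → Set V) : Prop :=
  IsCovering P ∧ ∀ i j : Fin m, i ≠ j → P i ∩ P j = ∅

/-- Conditions (1) and (2) of the additive-subset definition (together with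
connectivity of the candidate set `S`). -/
def AddCond {m : ℕ} (G : Env V) (s : Fin m → ℝ) (P : Fin m → Set V) (c : Fin m → V)
    (T : Fin m → ℝ) (i : Fin m) (Pid : Set V) (k : V) (S : Set V) : Prop :=
  ConnIn G S ∧ Pid ⊆ S ∧
    ∀ j : Fin m, j ≠ i → ∀ h ∈ S ∩ P j,
      T j = 0 ∧
      ENNReal.ofReal (1 / s i) * dIn G S h k < ENNReal.ofReal (1 / s j) * dIn G (P j) h (c j)

/-- `S` is *the* additive subset `P_i^add(k)` : the largest connected subset
satisfying conditions (1) and (2); it contains every subset satisfying them. -/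
def IsAddSet {m : ℕ} (G : Env V) (s : Fin m → ℝ) (P : Fin m → Set V) (c : Fin m → V)
    (T : Fin m → ℝ) (i : Fin m) (Pid : Set V) (k : V) (S : Set V) : Prop :=
  AddCond G s P c T i Pid k S ∧ ∀ S' : Set V, AddCond G s P c T i Pid k S' → S' ⊆ S

/-- The coverage cost `H(c, P, t)`. -/
def Hcost {m : ℕ} [Fintype V] (G : Env V) (s : Fin m → ℝ) (Φ : V → ℝ → ℝ)
    (c : Fin m → V) (P : Fin m → Set V) (t : ℝ) : ℝ≥0∞ :=
  ∑ k : V,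
    sInf {x : ℝ≥0∞ | ∃ i : Fin m, k ∈ P i ∧ x = ENNReal.ofReal (1 / s i) * dIn G (P i) k (c i)} *
      ENNReal.ofReal (Φ k t)

/-- The complete state maintained by the base station together with all the
agents' local variables. -/
structure CovState (V : Type u) (m : ℕ) where
  P : Fin m → Set V
  c : Fin m → V
  ID : V → Fin m
  T : Fin m → ℝ
  ω : Fin m → ℝ
  PA : Fin m → Set V
  cA : Fin m → V
  Ppd : Fin m → Set V
  τA : Fin m → ℝ
  ωA : Fin m → ℝ

namespace CovState

variable {m : ℕ}

/-- `P_i^ID`, the set of vertices whose identifier equals `i`. -/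
def Pid (σ : CovState V m) (i : Fin m) : Set V := {k | σ.ID k = i}

/-- The local likelihood function `Φ_i^A`. -/
def ΦA (σ : CovState V m) (Φ : V → ℝ → ℝ) (i : Fin m) (k : V) (t : ℝ) : ℝ :=
  if k ∈ σ.PA i ∧ (σ.τA i ≤ t - σ.ωA i ∨ k ∉ σ.Ppd i) then Φ k t else 0

/-- The prohibited region `Proh_i(t)`. -/
def Proh (σ : CovState V m) (i : Fin m) (t : ℝ) : Set V :=
  {k ∈ σ.PA i | t - σ.ωA i < σ.τA i ∧ k ∈ σ.Ppd i}

/-- Continuous (flow) evolution of the state for `δ` time units: only the timers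
change, each decreasing at unit rate until reaching `0`. -/
def decay (σ : CovState V m) (δ : ℝ) : CovState V m :=
  { σ with T := fun i => max (σ.T i - δ) 0 }

end CovState

/-- The trivial branch of Algorithm 1 (`T_i > 0` and `P_i^* = P_i`): only the
timing variables of the communicating agent are touched. -/
def NoopUpdate {m : ℕ} (i : Fin m) (t0 : ℝ) (σ σ' : CovState V m) : Prop :=
  σ' = { σ with τA := Function.update σ.τA i (σ.τA i - t0 + σ.ω i),
                ωA := Function.update σ.ωA i t0,
                ω := Function.update σ.ω i t0 }

/-- The main branch of Algorithm 1 (together with the timer update, Algorithm 2),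
executed upon an exchange between the base station and agent `i` at time `t0`. -/
def FullUpdate {m : ℕ} [Fintype V] (G : Env V) (s : Fin m → ℝ) (Φ : V → ℝ → ℝ)
    (Δbar ΔH : ℝ) (i : Fin m) (t0 : ℝ) (σ σ' : CovState V m) : Prop :=
  ∃ (cstar : V) (Pstar : Set V),
    -- `(cstar, Pstar)` is one of the candidate configurations:
    ((cstar = σ.c i ∧ Pstar = σ.Pid i) ∨
      (cstar ∈ σ.Pid i ∧ IsAddSet G s σ.P σ.c σ.T i (σ.Pid i) cstar Pstar)) ∧
    -- and it minimizes the cost `H` among all candidate configurations: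
    (∀ (k : V) (S : Set V),
      ((k = σ.c i ∧ S = σ.Pid i) ∨
        (k ∈ σ.Pid i ∧ IsAddSet G s σ.P σ.c σ.T i (σ.Pid i) k S)) →
      Hcost G s Φ (Function.update σ.c i cstar) (Function.update σ.P i Pstar) t0 ≤
        Hcost G s Φ (Function.update σ.c i k) (Function.update σ.P i S) t0) ∧
    σ'.P = Function.update σ.P i Pstar ∧
    σ'.PA = Function.update σ.PA i Pstar ∧
    σ'.c = Function.update σ.c i cstar ∧
    σ'.cA = Function.update σ.cA i cstar ∧
    σ'.Ppd = Function.update σ.Ppd i (Pstar \ σ.Pid i) ∧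
    σ'.ω = Function.update σ.ω i t0 ∧
    σ'.ωA = Function.update σ.ωA i t0 ∧
    σ'.ID = (fun k => if k ∈ Pstar then i else σ.ID k) ∧
    (∀ j : Fin m, j ≠ i → (σ.P j ∩ Pstar).Nonempty → σ'.T j = σ.ω j + Δbar - t0) ∧
    (∀ j : Fin m, j ≠ i → ¬(σ.P j ∩ Pstar).Nonempty → σ'.T j = σ.T j) ∧
    -- `T_i := Δ_max^Bf + Δ_H`, where `Δ_max^Bf` is as in Algorithm 2 (max ∅ := 0):
    σ'.T i =
      max
        (sSup {x : ℝ | ∃ k ∈ σ.P i \ Pstar,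
          x = (1 / s i) * (dInSet G (σ.P i) k (Pstar \ (Pstar \ σ.Pid i))).toReal})
        (sSup {x : ℝ | ∃ j : Fin m, j ≠ i ∧ (σ.P j ∩ Pstar).Nonempty ∧
          x = σ.ω j + Δbar +
            sSup {y : ℝ | ∃ k ∈ σ.P j ∩ Pstar,
              y = (1 / s j) * (dInSet G (σ.P j) k (σ.P j \ Pstar)).toReal} - t0}) + ΔH ∧
    -- `τ_i^A := Δ_max^Bf`:
    σ'.τA = Function.update σ.τA i (σ'.T i - ΔH)

/-- The one-to-base-station update of Algorithm 1 performed at time `t0` upon an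
exchange with agent `i`; `σ` is the state just before and `σ'` just after. -/
def UpdateAt {m : ℕ} [Fintype V] (G : Env V) (s : Fin m → ℝ) (Φ : V → ℝ → ℝ)
    (Δbar ΔH : ℝ) (i : Fin m) (t0 : ℝ) (σ σ' : CovState V m) : Prop :=
  (0 < σ.T i ∧ σ.Pid i = σ.P i ∧ NoopUpdate i t0 σ σ') ∨
  (¬(0 < σ.T i ∧ σ.Pid i = σ.P i) ∧ FullUpdate G s Φ Δbar ΔH i t0 σ σ')

/-- Assumption 1 (initialization). -/
def InitOK {m : ℕ} (G : Env V) (ΔH : ℝ) (σ : CovState V m) : Prop :=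
  IsPartition σ.P ∧ (∀ i, ConnIn G (σ.P i)) ∧
    ∀ i : Fin m,
      σ.PA i = σ.P i ∧ σ.P i = σ.Pid i ∧ σ.cA i = σ.c i ∧ σ.c i ∈ σ.P i ∧
      σ.Ppd i = ∅ ∧ σ.T i = 0 ∧ σ.ω i = 0 ∧ σ.ωA i = 0 ∧ σ.τA i = -ΔH

/-- An execution of the asynchronous one-to-base-station coverage scheme:
exchanges occur at the times `etime n` with the agents `eagent n`, successive
exchanges are separated by at least `Δlow`, each agent communicates at least
every `Δ̄` time units, the state is initialized according to Assumption 1,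
flows (only the timers decay) in between exchanges, and jumps according to
Algorithm 1 at each exchange. -/
structure Execution [Fintype V] (G : Env V) (m : ℕ) (s : Fin m → ℝ) (Φ : V → ℝ → ℝ)
    (Δlow Δbar ΔH : ℝ) where
  etime : ℕ → ℝ
  eagent : ℕ → Fin m
  state : ℝ → CovState V m
  s_pos : ∀ i, 0 < s i
  Δlow_pos : 0 < Δlow
  Δbar_pos : 0 < Δbar
  ΔH_pos : 0 < ΔH
  Φ_nonneg : ∀ k t, 0 ≤ Φ k t
  Φ_sum : ∀ t : ℝ, ∑ k : V, Φ k t = 1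
  etime_pos : ∀ n, 0 < etime n
  etime_sep : ∀ n, etime n + Δlow ≤ etime (n + 1)
  persistent : ∀ (i : Fin m) (t : ℝ), 0 ≤ t →
    ∃ n, eagent n = i ∧ t ≤ etime n ∧ etime n ≤ t + Δbar
  init : InitOK G ΔH (state 0)
  flow : ∀ t₁ t₂ : ℝ, 0 ≤ t₁ → t₁ ≤ t₂ →
    (∀ n, ¬(t₁ < etime n ∧ etime n ≤ t₂)) →
    state t₂ = (state t₁).decay (t₂ - t₁)
  jump : ∀ (n : ℕ) (t₁ : ℝ), 0 ≤ t₁ → t₁ < etime n →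
    (∀ p, ¬(t₁ < etime p ∧ etime p < etime n)) →
    UpdateAt G s Φ Δbar ΔH (eagent n) (etime n)
      ((state t₁).decay (etime n - t₁)) (state (etime n))

/-- Twice the sum, over the edges of `G`, of the graph distance between the
endpoints, halved (i.e. the sum over unordered edges). -/
def edgeSum [Fintype V] (G : Env V) : ℝ :=
  (1 / 2) * ∑ p : V × V, if G.adj p.1 p.2 then (dIn G Set.univ p.1 p.2).toReal else 0

/-- `d̄ := max_i (1/s_i) · Σ_{{k1,k2} ∈ E} d_Q(k1,k2)`. -/
def dbar {m : ℕ} [Fintype V] (G : Env V) (s : Fin m → ℝ) : ℝ :=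
  sSup {x : ℝ | ∃ i : Fin m, x = (1 / s i) * edgeSum G}

end

lemma pathIn_mono' {V : Type*} (G : Env V) {S T : Set V} (hST : S ⊆ T) :
    ∀ p : List V, PathIn G S p → PathIn G T p
  | [] => id
  | [v] => fun h => hST h
  | u :: v :: rest => fun h => ⟨hST h.1, h.2.1, pathIn_mono' G hST (v :: rest) h.2.2⟩

lemma pathIn_append' {V : Type*} (G : Env V) {S : Set V} {k : V} :
    ∀ p : List V, PathIn G S p → p.getLast? = some k →
      ∀ q : List V, PathIn G S q → q.head? = some k → PathIn G S (p ++ q.tail) := by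
  intro p
  induction p with
  | nil => intro hp; exact absurd hp (by simp [PathIn])
  | cons u rest ih =>
    intro hp hl q hq hh
    match rest, hp, hl with
    | [], hp, hl =>
      have hk : u = k := by simpa using hl
      subst hk
      match q, hq, hh with
      | [w], hq, hh =>
        have hw : w = u := by simpa using hh
        subst hw; simpa using hq
      | w :: v :: r, hq, hh =>
        have hw : w = u := by simpa using hh
        subst hw; simpa using hq
    | v :: rest', hp, hl =>
      refine ⟨hp.1, hp.2.1, ?_⟩
      have hl' : (v :: rest').getLast? = some k := by
        simpa [List.getLast?_cons_cons] using hl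
      simpa using ih hp.2.2 hl' q hq hh

lemma reach_trans' {V : Type*} (G : Env V) {S : Set V} {a k b : V}
    (h1 : ∃ p, PathIn G S p ∧ p.head? = some a ∧ p.getLast? = some k)
    (h2 : ∃ q, PathIn G S q ∧ q.head? = some k ∧ q.getLast? = some b) :
    ∃ r, PathIn G S r ∧ r.head? = some a ∧ r.getLast? = some b := by
  obtain ⟨p, hp, hph, hpl⟩ := h1
  obtain ⟨q, hq, hqh, hql⟩ := h2
  refine ⟨p ++ q.tail, pathIn_append' G p hp hpl q hq hqh, ?_, ?_⟩
  · rcases p with _ | ⟨u, rest⟩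
    · simp at hph
    · simpa using hph
  · rcases q with _ | ⟨w, t⟩
    · simp at hqh
    · rcases t with _ | ⟨v, t'⟩
      · have hkb : k = b := by
          have h1 : w = k := by simpa using hqh
          have h2 : w = b := by simpa using hql
          rw [← h1, h2]
        simpa [hkb] using hpl
      · show (p ++ v :: t').getLast? = some b
        rw [List.getLast?_append_cons]
        simpa [List.getLast?_cons_cons] using hql

lemma dIn_mono' {V : Type*} (G : Env V) {S T : Set V} (hST : S ⊆ T) (a b : V) :
    dIn G T a b ≤ dIn G S a b := by
  apply sInf_le_sInf
  rintro L ⟨p, hp, h1, h2, h3⟩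
  exact ⟨p, pathIn_mono' G hST p hp, h1, h2, h3⟩

/-- Proposition 1, well-posedness of the additive subset.
If `P_i^ID` is connected and disjoint from `⋃_{j ≠ i} P_j`, then for every
`k ∈ P_i^ID` the additive subset `P_i^add(k)` exists and is unique: there is a
unique largest connected subset satisfying conditions (1) and (2), and it
contains every connected subset satisfying those conditions. -/
theorem additive_subset_exists_unique {V : Type*} {m : ℕ} (G : Env V)
    (s : Fin m → ℝ) (hs : ∀ i, 0 < s i)
    (P : Fin m → Set V) (c : Fin m → V) (T : Fin m → ℝ) (hT : ∀ j, 0 ≤ T j)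
    (i : Fin m) (PidSet : Set V)
    (hconn : ConnIn G PidSet)
    (hdisj : ∀ j : Fin m, j ≠ i → PidSet ∩ P j = ∅) :
    ∀ k ∈ PidSet, ∃! S : Set V, IsAddSet G s P c T i PidSet k S := by
  intro k hk
  set F : Set (Set V) := {S | AddCond G s P c T i PidSet k S} with hF
  have hPidF : PidSet ∈ F := by
    refine ⟨hconn, le_refl _, ?_⟩
    intro j hj h hh
    rw [hdisj j hj] at hh
    exact absurd hh (Set.notMem_empty h)
  have hsub : ∀ S' ∈ F, S' ⊆ ⋃₀ F := fun S' h => Set.subset_sUnion_of_mem h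
  have hPidU : PidSet ⊆ ⋃₀ F := hsub _ hPidF
  have hUcond : AddCond G s P c T i PidSet k (⋃₀ F) := by
    refine ⟨?_, hPidU, ?_⟩
    · intro a ha b hb
      obtain ⟨S₁, hS₁, ha₁⟩ := ha
      obtain ⟨S₂, hS₂, hb₂⟩ := hb
      have hk₁ : k ∈ S₁ := hS₁.2.1 hk
      have hk₂ : k ∈ S₂ := hS₂.2.1 hk
      obtain ⟨p, hp, hph, hpl⟩ := hS₁.1 a ha₁ k hk₁
      obtain ⟨q, hq, hqh, hql⟩ := hS₂.1 k hk₂ b hb₂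
      exact reach_trans' G ⟨p, pathIn_mono' G (hsub _ hS₁) p hp, hph, hpl⟩
        ⟨q, pathIn_mono' G (hsub _ hS₂) q hq, hqh, hql⟩
    · intro j hj h hh
      obtain ⟨hhU, hhPj⟩ := hh
      obtain ⟨S', hS', hhS'⟩ := hhU
      obtain ⟨hT0, hlt⟩ := hS'.2.2 j hj h ⟨hhS', hhPj⟩
      refine ⟨hT0, lt_of_le_of_lt ?_ hlt⟩
      exact mul_le_mul_right (dIn_mono' G (hsub _ hS') h k) _
  refine ⟨⋃₀ F, ⟨hUcond, fun S' h => hsub S' h⟩, ?_⟩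
  intro S hS
  exact Set.Subset.antisymm (hsub S hS.1) (hS.2 _ hUcond)
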